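/- arXiv:1607.02962 — 2 statements merged into one kernel-verified Lean document; each statement's English description precedes it below -/
import Mathlib

section
/- Let d ≥ 1, γ > 0, and let P, Q ∈ L¹(ℝ^d) with P ≥ 0 almost everywhere satisfy the Ornstein–Zernike equation P = Q + γ Q∗P almost everywhere. Then 0 ≤ ∫_{ℝ^d} Q(x) dx < γ^{-1}, and moreover 1 + γ∫_{ℝ^d} P(x) dx = (1 − γ∫_{ℝ^d} Q(x) dx)^{-1}. (Interpreting S := 1 + γ∫P as the mean size of the cluster of a typical point, this says E|C(0)| = (1 − γ∫Q)^{-1}.) -/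
open MeasureTheory
open scoped ENNReal Convolution

noncomputable section

def conv {d : ℕ} (f g : EuclideanSpace ℝ (Fin d) → ℝ) :
    EuclideanSpace ℝ (Fin d) → ℝ :=
  fun x => ∫ y, f (x - y) * g y

lemma conv_eq {d : ℕ} (f g : EuclideanSpace ℝ (Fin d) → ℝ) :
    conv f g = g ⋆[ContinuousLinearMap.mul ℝ ℝ] f := by
  ext x
  simp [conv, convolution, mul_comm]

/-- If `P, Q ∈ L¹` with `P ≥ 0` a.e. satisfy the Ornstein-Zernike equation
`P = Q + γ Q ∗ P` a.e., then `0 ≤ ∫ Q < γ⁻¹` and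
`1 + γ ∫ P = (1 - γ ∫ Q)⁻¹`. -/
theorem ornstein_zernike_integral_Q
    {d : ℕ} (hd : 1 ≤ d) (γ : ℝ) (hγ : 0 < γ)
    (P Q : EuclideanSpace ℝ (Fin d) → ℝ)
    (hP1 : Integrable P) (hQ1 : Integrable Q)
    (hPpos : ∀ᵐ x : EuclideanSpace ℝ (Fin d), 0 ≤ P x)
    (hOZ : ∀ᵐ x : EuclideanSpace ℝ (Fin d), P x = Q x + γ * conv Q P x) :
    0 ≤ ∫ x, Q x ∧ (∫ x, Q x) < γ⁻¹ ∧
      1 + γ * ∫ x, P x = (1 - γ * ∫ x, Q x)⁻¹ := by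
  have hconvInt : Integrable (conv Q P) := by
    rw [conv_eq]
    exact hP1.integrable_convolution (ContinuousLinearMap.mul ℝ ℝ) hQ1
  have hconv : ∫ x, conv Q P x = (∫ x, P x) * ∫ x, Q x := by
    rw [conv_eq]
    simpa using integral_convolution (ContinuousLinearMap.mul ℝ ℝ) hP1 hQ1
  have key : ∫ x, P x = (∫ x, Q x) + γ * ((∫ x, P x) * ∫ x, Q x) := by
    have h := integral_congr_ae hOZ
    rw [integral_add hQ1 (hconvInt.const_mul γ), integral_const_mul, hconv] at h
    exact h
  have hppos : (0:ℝ) ≤ ∫ x, P x := integral_nonneg_of_ae hPpos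
  set p := ∫ x, P x with hp
  set q := ∫ x, Q x with hq
  have h1 : (0:ℝ) < 1 + γ * p := by nlinarith
  have hqval : q = p / (1 + γ * p) := by
    field_simp
    nlinarith
  have hq0 : 0 ≤ q := by rw [hqval]; positivity
  have hγq : γ * q < 1 := by
    rw [hqval, mul_div_assoc']
    exact (div_lt_one h1).mpr (by nlinarith)
  refine ⟨hq0, ?_, ?_⟩
  · rw [inv_eq_one_div, lt_div_iff₀ hγ]
    nlinarith
  · have h2 : 1 - γ * q = (1 + γ * p)⁻¹ := by
      rw [hqval, mul_div_assoc']
      field_simp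
      ring
    rw [h2, inv_inv]

end
end

section
/- For all n, m ∈ ℕ₀ and all graphs G₁ ∈ 𝒢_n, G₂ ∈ 𝒢_m, the concatenation satisfies π_{n+m+1}(G₁ ⊙ G₂) = π_n(G₁) · π_m(G₂). -/
open MeasureTheory Finset
open scoped ENNReal Classical

noncomputable section

/-- The interior vertices `{1,…,n}` of the vertex set `{0,1,…,n+1}` (as `Fin (n+2)`). -/
def interiorVerts (n : ℕ) : Finset (Fin (n + 2)) :=
  Finset.univ.filter fun v => v ≠ 0 ∧ v ≠ Fin.last (n + 1)

/-- `ConnIn G a b S` : there is a path from `a` to `b` in `G` using only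
vertices in `S ∪ {a, b}`. -/
def ConnIn {k : ℕ} (G : SimpleGraph (Fin k)) (a b : Fin k) (S : Set (Fin k)) : Prop :=
  ∃ w : G.Walk a b, ∀ v ∈ w.support, v = a ∨ v = b ∨ v ∈ S

/-- `π_n(G) = Σ_{I ⊆ [n]} (-1)^{n-|I|} 1{0 ↔ n+1 in G|I}`. -/
def piFun (n : ℕ) (G : SimpleGraph (Fin (n + 2))) : ℤ :=
  ∑ I ∈ (interiorVerts n).powerset,
    (-1 : ℤ) ^ (n - I.card) *
      (if ConnIn G 0 (Fin.last (n + 1)) ↑I then 1 else 0)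

/-- The number of edges of `G`, counted via ordered pairs `i < j`. -/
def edgeCount {k : ℕ} (G : SimpleGraph (Fin k)) : ℕ :=
  (Finset.univ.filter fun p : Fin k × Fin k => p.1 < p.2 ∧ G.Adj p.1 p.2).card

/-- `κ_n(H) = Σ_{G ∈ 𝒢_n, E(G) ⊆ E(H)} (-1)^{|E(H)|-|E(G)|} π_n(G)`. -/
def kappaFun (n : ℕ) (H : SimpleGraph (Fin (n + 2))) : ℤ :=
  ∑ G ∈ Finset.univ.filter
      (fun G : SimpleGraph (Fin (n + 2)) => G.Connected ∧ G ≤ H),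
    (-1 : ℤ) ^ (edgeCount H - edgeCount G) * piFun n G

/-- Embedding of the first factor's vertex set into that of the concatenation. -/
def emb1 (n m : ℕ) : Fin (n + 2) → Fin (n + m + 3) :=
  fun i => ⟨i.1, by have := i.isLt; omega⟩

/-- Embedding of the second factor's vertex set into that of the concatenation:
the vertices `0,…,m+1` of `G₂` are relabelled as `n+1,…,n+m+2`. -/
def emb2 (n m : ℕ) : Fin (m + 2) → Fin (n + m + 3) :=
  fun j => ⟨n + 1 + j.1, by have := j.isLt; omega⟩

/-- The concatenation `G₁ ⊙ G₂`: the end-vertex `n+1` of `G₁` is identified with the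
start-vertex of `G₂` and the edge sets are united. -/
def concatG {n m : ℕ} (G₁ : SimpleGraph (Fin (n + 2))) (G₂ : SimpleGraph (Fin (m + 2))) :
    SimpleGraph (Fin (n + m + 3)) :=
  SimpleGraph.fromRel fun u v =>
    (∃ i j, G₁.Adj i j ∧ u = emb1 n m i ∧ v = emb1 n m j) ∨
    (∃ i j, G₂.Adj i j ∧ u = emb2 n m i ∧ v = emb2 n m j)


-- ### Auxiliary development ###
def restrG {V : Type*} (G : SimpleGraph V) (A : Set V) : SimpleGraph V where
  Adj u v := G.Adj u v ∧ u ∈ A ∧ v ∈ A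
  symm := ⟨fun u v h => ⟨h.1.symm, h.2.2, h.2.1⟩⟩
  loopless := ⟨fun u h => G.loopless.irrefl u h.1⟩

lemma reach_transfer {V W : Type*} {H : SimpleGraph V} {H' : SimpleGraph W} (f : V → W)
    (hf : ∀ u v, H.Adj u v → f u = f v ∨ H'.Adj (f u) (f v)) {a b : V}
    (h : H.Reachable a b) : H'.Reachable (f a) (f b) := by
  obtain ⟨w⟩ := h
  induction w with
  | nil => exact SimpleGraph.Reachable.refl _
  | cons h' p ih =>
    rcases hf _ _ h' with he | ha
    · rw [he]; exact ih
    · exact ha.reachable.trans ih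

lemma connIn_iff {k : ℕ} (G : SimpleGraph (Fin k)) (a b : Fin k) (S : Set (Fin k)) :
    ConnIn G a b S ↔ (restrG G {v | v = a ∨ v = b ∨ v ∈ S}).Reachable a b := by
  set A : Set (Fin k) := {v | v = a ∨ v = b ∨ v ∈ S} with hA
  constructor
  · rintro ⟨w, hw⟩
    have aux : ∀ (u u' : Fin k) (w : G.Walk u u'), (∀ v ∈ w.support, v ∈ A) →
        (restrG G A).Reachable u u' := by
      intro u u' w
      induction w with
      | nil => exact fun _ => SimpleGraph.Reachable.refl _
      | @cons x y z h p ih =>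
        intro hs
        have hxy : (restrG G A).Adj x y := ⟨h, hs x (by simp), hs y (by simp)⟩
        exact hxy.reachable.trans (ih fun v hv => hs v (by simp [SimpleGraph.Walk.support_cons, hv]))
    exact aux a b w fun v hv => hw v hv
  · intro h
    obtain ⟨w⟩ := h
    have aux : ∀ (u u' : Fin k) (w : (restrG G A).Walk u u'),
        ∃ w2 : G.Walk u u', ∀ v ∈ w2.support, v = u ∨ v ∈ A := by
      intro u u' w
      induction w with
      | nil => exact ⟨SimpleGraph.Walk.nil, by simp⟩
      | @cons x y z h p ih =>
        obtain ⟨w2, hw2⟩ := ih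
        refine ⟨SimpleGraph.Walk.cons h.1 w2, ?_⟩
        intro v hv
        rcases List.mem_cons.1 (by simpa using hv) with rfl | hv'
        · exact Or.inl rfl
        · rcases hw2 v hv' with rfl | h' 
          · exact Or.inr h.2.2
          · exact Or.inr h'
    obtain ⟨w2, hw2⟩ := aux a b w
    refine ⟨w2, fun v hv => ?_⟩
    rcases hw2 v hv with rfl | h'
    · exact Or.inl rfl
    · exact h'



def cvert (n m : ℕ) : Fin (n + m + 3) := ⟨n + 1, by omega⟩

section Basics
variable {n m : ℕ}

lemma emb1_inj : Function.Injective (emb1 n m) := by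
  intro i j h; exact Fin.ext (by simpa [emb1, Fin.ext_iff] using h)

lemma emb2_inj : Function.Injective (emb2 n m) := by
  intro i j h; exact Fin.ext (by simpa [emb2, Fin.ext_iff] using h)

@[simp] lemma emb1_val (i : Fin (n+2)) : (emb1 n m i).1 = i.1 := rfl
@[simp] lemma emb2_val (j : Fin (m+2)) : (emb2 n m j).1 = n + 1 + j.1 := rfl

lemma emb1_zero : emb1 n m 0 = 0 := rfl
lemma emb1_last : emb1 n m (Fin.last (n+1)) = cvert n m := rfl
lemma emb2_zero : emb2 n m 0 = cvert n m := by simp [emb2, cvert, Fin.ext_iff]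
lemma emb2_last : emb2 n m (Fin.last (m+1)) = Fin.last (n+m+2) := by
  simp [emb2, Fin.ext_iff]; omega

variable {G₁ : SimpleGraph (Fin (n + 2))} {G₂ : SimpleGraph (Fin (m + 2))}

lemma concat_adj {u v : Fin (n+m+3)} :
    (concatG G₁ G₂).Adj u v ↔ u ≠ v ∧
      ((∃ i j, G₁.Adj i j ∧ u = emb1 n m i ∧ v = emb1 n m j) ∨
       (∃ i j, G₂.Adj i j ∧ u = emb2 n m i ∧ v = emb2 n m j)) := by
  rw [concatG, SimpleGraph.fromRel_adj]
  constructor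
  · rintro ⟨hne, (⟨i,j,h,h1,h2⟩|⟨i,j,h,h1,h2⟩)|(⟨i,j,h,h1,h2⟩|⟨i,j,h,h1,h2⟩)⟩
    exacts [⟨hne, Or.inl ⟨i,j,h,h1,h2⟩⟩, ⟨hne, Or.inr ⟨i,j,h,h1,h2⟩⟩,
            ⟨hne, Or.inl ⟨j,i,h.symm,h2,h1⟩⟩, ⟨hne, Or.inr ⟨j,i,h.symm,h2,h1⟩⟩]
  · rintro ⟨hne, h⟩; exact ⟨hne, Or.inl h⟩

lemma cut_mem_support :
    ∀ (u u' : Fin (n+m+3)) (w : (concatG G₁ G₂).Walk u u'),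
      u' = Fin.last (n+m+2) → u.1 ≤ n + 1 → cvert n m ∈ w.support := by
  intro u u' w
  induction w with
  | nil =>
    rintro rfl h2
    simp [Fin.val_last] at h2
  | @cons x y z h p ih =>
    intro h1 h2
    by_cases hc : x.1 = n + 1
    · have : x = cvert n m := Fin.ext hc
      simp [SimpleGraph.Walk.support_cons, this]
    · have hy : y.1 ≤ n + 1 := by
        rcases concat_adj.1 h with ⟨-, (⟨i,j,hij,rfl,rfl⟩|⟨i,j,hij,rfl,rfl⟩)⟩
        · have := j.isLt; simp; omega
        · exfalso
          have h2' : n + 1 + i.1 ≤ n + 1 := by simpa using h2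
          have hc' : ¬ n + 1 + i.1 = n + 1 := by simpa using hc
          omega
      simp only [SimpleGraph.Walk.support_cons, List.mem_cons]
      exact Or.inr (ih h1 hy)

end Basics

-- appended to b.lean content for testing
section PhiSec
variable {n m : ℕ}

def phiSet (n m : ℕ) (I₁ : Finset (Fin (n+2))) (I₂ : Finset (Fin (m+2))) :
    Finset (Fin (n+m+3)) :=
  insert (cvert n m) (I₁.image (emb1 n m) ∪ I₂.image (emb2 n m))

lemma mem_phiSet {I₁ : Finset (Fin (n+2))} {I₂ : Finset (Fin (m+2))} {v : Fin (n+m+3)} :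
    v ∈ phiSet n m I₁ I₂ ↔
      v = cvert n m ∨ (∃ i ∈ I₁, emb1 n m i = v) ∨ (∃ j ∈ I₂, emb2 n m j = v) := by
  simp [phiSet, Finset.mem_insert, Finset.mem_union, Finset.mem_image]

lemma mem_interiorVerts {n : ℕ} {i : Fin (n+2)} :
    i ∈ interiorVerts n ↔ 1 ≤ i.1 ∧ i.1 ≤ n := by
  have := i.isLt
  simp only [interiorVerts, Finset.mem_filter, Finset.mem_univ, true_and, Ne,
    Fin.ext_iff, Fin.val_zero, Fin.val_last]
  omega

def p1 (n m : ℕ) : Fin (n+m+3) → Fin (n+2) :=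
  fun v => if _ : v.1 ≤ n + 1 then ⟨v.1, by omega⟩ else Fin.last (n+1)

def p2 (n m : ℕ) : Fin (n+m+3) → Fin (m+2) :=
  fun v => if _ : v.1 ≤ n + 1 then 0 else ⟨v.1 - (n+1), by have := v.isLt; omega⟩

lemma p1_emb1 (i : Fin (n+2)) : p1 n m (emb1 n m i) = i := by
  have h : (emb1 n m i).1 ≤ n + 1 := by have := i.isLt; simp; omega
  simp only [p1]; rw [dif_pos h]; exact Fin.ext rfl

lemma p1_emb2 (j : Fin (m+2)) : p1 n m (emb2 n m j) = Fin.last (n+1) := by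
  by_cases h : (emb2 n m j).1 ≤ n + 1
  · have hj : j.1 = 0 := by simp only [emb2_val] at h; omega
    simp only [p1]; rw [dif_pos h]
    exact Fin.ext (by simp [Fin.val_last, hj])
  · simp only [p1]; rw [dif_neg h]

lemma p2_emb1 (i : Fin (n+2)) : p2 n m (emb1 n m i) = 0 := by
  have h : (emb1 n m i).1 ≤ n + 1 := by have := i.isLt; simp; omega
  simp only [p2]; rw [dif_pos h]

lemma p2_emb2 (j : Fin (m+2)) : p2 n m (emb2 n m j) = j := by
  by_cases h : (emb2 n m j).1 ≤ n + 1
  · have hj : j.1 = 0 := by simp only [emb2_val] at h; omega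
    simp only [p2]; rw [dif_pos h]
    exact Fin.ext (by simp [hj])
  · simp only [p2]; rw [dif_neg h]
    exact Fin.ext (by simp)

lemma p1_zero : p1 n m 0 = 0 := by rw [← emb1_zero, p1_emb1]
lemma p2_zero : p2 n m 0 = 0 := by rw [← emb1_zero, p2_emb1]
lemma p1_lastN : p1 n m (Fin.last (n+m+2)) = Fin.last (n+1) := by
  rw [← emb2_last, p1_emb2]
lemma p2_lastN : p2 n m (Fin.last (n+m+2)) = Fin.last (m+1) := by
  rw [← emb2_last, p2_emb2]
lemma p1_cvert : p1 n m (cvert n m) = Fin.last (n+1) := by rw [← emb1_last, p1_emb1]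
lemma p2_cvert : p2 n m (cvert n m) = 0 := by rw [← emb2_zero, p2_emb2]

variable {G₁ : SimpleGraph (Fin (n + 2))} {G₂ : SimpleGraph (Fin (m + 2))}
variable {I₁ : Finset (Fin (n+2))} {I₂ : Finset (Fin (m+2))}

lemma not_connIn {I : Finset (Fin (n+m+3))} (hc : cvert n m ∉ I) :
    ¬ ConnIn (concatG G₁ G₂) 0 (Fin.last (n+m+2)) ↑I := by
  rintro ⟨w, hw⟩
  have hmem := cut_mem_support 0 _ w rfl (by simp)
  rcases hw _ hmem with h | h | h
  · have := congrArg Fin.val h; simp [cvert] at this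
  · have := congrArg Fin.val h; simp [cvert, Fin.val_last] at this; omega
  · exact hc (Finset.mem_coe.1 h)

lemma conn_equiv (hI₁ : I₁ ⊆ interiorVerts n) (hI₂ : I₂ ⊆ interiorVerts m) :
    ConnIn (concatG G₁ G₂) 0 (Fin.last (n+m+2)) ↑(phiSet n m I₁ I₂) ↔
      (ConnIn G₁ 0 (Fin.last (n+1)) ↑I₁ ∧ ConnIn G₂ 0 (Fin.last (m+1)) ↑I₂) := by
  rw [connIn_iff, connIn_iff, connIn_iff]
  set A : Set (Fin (n+m+3)) :=
    {v | v = 0 ∨ v = Fin.last (n+m+2) ∨ v ∈ ↑(phiSet n m I₁ I₂)} with hAdef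
  set A₁ : Set (Fin (n+2)) := {v | v = 0 ∨ v = Fin.last (n+1) ∨ v ∈ ↑I₁} with hA1def
  set A₂ : Set (Fin (m+2)) := {v | v = 0 ∨ v = Fin.last (m+1) ∨ v ∈ ↑I₂} with hA2def
  have memA1 : ∀ u ∈ A, p1 n m u ∈ A₁ := by
    intro u hu
    rcases hu with rfl | rfl | hu
    · rw [p1_zero]; exact Or.inl rfl
    · rw [p1_lastN]; exact Or.inr (Or.inl rfl)
    · rcases mem_phiSet.1 (Finset.mem_coe.1 hu) with rfl | ⟨i, hi, rfl⟩ | ⟨j, hj, rfl⟩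
      · rw [p1_cvert]; exact Or.inr (Or.inl rfl)
      · rw [p1_emb1]; exact Or.inr (Or.inr hi)
      · rw [p1_emb2]; exact Or.inr (Or.inl rfl)
  have memA2 : ∀ u ∈ A, p2 n m u ∈ A₂ := by
    intro u hu
    rcases hu with rfl | rfl | hu
    · rw [p2_zero]; exact Or.inl rfl
    · rw [p2_lastN]; exact Or.inr (Or.inl rfl)
    · rcases mem_phiSet.1 (Finset.mem_coe.1 hu) with rfl | ⟨i, hi, rfl⟩ | ⟨j, hj, rfl⟩
      · rw [p2_cvert]; exact Or.inl rfl
      · rw [p2_emb1]; exact Or.inl rfl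
      · rw [p2_emb2]; exact Or.inr (Or.inr hj)
  have memE1 : ∀ u ∈ A₁, emb1 n m u ∈ A := by
    intro u hu
    rcases hu with rfl | rfl | hu
    · rw [emb1_zero]; exact Or.inl rfl
    · rw [emb1_last]
      exact Or.inr (Or.inr (Finset.mem_coe.2 (mem_phiSet.2 (Or.inl rfl))))
    · exact Or.inr (Or.inr (Finset.mem_coe.2
        (mem_phiSet.2 (Or.inr (Or.inl ⟨u, Finset.mem_coe.1 hu, rfl⟩)))))
  have memE2 : ∀ u ∈ A₂, emb2 n m u ∈ A := by
    intro u hu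
    rcases hu with rfl | rfl | hu
    · rw [emb2_zero]
      exact Or.inr (Or.inr (Finset.mem_coe.2 (mem_phiSet.2 (Or.inl rfl))))
    · rw [emb2_last]; exact Or.inr (Or.inl rfl)
    · exact Or.inr (Or.inr (Finset.mem_coe.2
        (mem_phiSet.2 (Or.inr (Or.inr ⟨u, Finset.mem_coe.1 hu, rfl⟩)))))
  constructor
  · intro h
    constructor
    · have hp1 : ∀ u v, (restrG (concatG G₁ G₂) A).Adj u v →
          p1 n m u = p1 n m v ∨ (restrG G₁ A₁).Adj (p1 n m u) (p1 n m v) := by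
        rintro u v ⟨hadj, hu, hv⟩
        rcases concat_adj.1 hadj with ⟨hne, (⟨i,j,hij,rfl,rfl⟩|⟨i,j,hij,rfl,rfl⟩)⟩
        · right
          refine ⟨?_, memA1 _ hu, memA1 _ hv⟩
          rw [p1_emb1, p1_emb1]; exact hij
        · left; rw [p1_emb2, p1_emb2]
      have := reach_transfer (p1 n m) hp1 h
      rwa [p1_zero, p1_lastN] at this
    · have hp2 : ∀ u v, (restrG (concatG G₁ G₂) A).Adj u v →
          p2 n m u = p2 n m v ∨ (restrG G₂ A₂).Adj (p2 n m u) (p2 n m v) := by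
        rintro u v ⟨hadj, hu, hv⟩
        rcases concat_adj.1 hadj with ⟨hne, (⟨i,j,hij,rfl,rfl⟩|⟨i,j,hij,rfl,rfl⟩)⟩
        · left; rw [p2_emb1, p2_emb1]
        · right
          refine ⟨?_, memA2 _ hu, memA2 _ hv⟩
          rw [p2_emb2, p2_emb2]; exact hij
      have := reach_transfer (p2 n m) hp2 h
      rwa [p2_zero, p2_lastN] at this
  · rintro ⟨h1, h2⟩
    have he1 : ∀ u v, (restrG G₁ A₁).Adj u v →
        emb1 n m u = emb1 n m v ∨ (restrG (concatG G₁ G₂) A).Adj (emb1 n m u) (emb1 n m v) := by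
      rintro u v ⟨hadj, hu, hv⟩
      right
      refine ⟨concat_adj.2 ⟨fun hh => hadj.ne (emb1_inj hh), Or.inl ⟨u, v, hadj, rfl, rfl⟩⟩,
        memE1 _ hu, memE1 _ hv⟩
    have he2 : ∀ u v, (restrG G₂ A₂).Adj u v →
        emb2 n m u = emb2 n m v ∨ (restrG (concatG G₁ G₂) A).Adj (emb2 n m u) (emb2 n m v) := by
      rintro u v ⟨hadj, hu, hv⟩
      right
      refine ⟨concat_adj.2 ⟨fun hh => hadj.ne (emb2_inj hh), Or.inr ⟨u, v, hadj, rfl, rfl⟩⟩,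
        memE2 _ hu, memE2 _ hv⟩
    have r1 := reach_transfer (emb1 n m) he1 h1
    have r2 := reach_transfer (emb2 n m) he2 h2
    rw [emb1_zero, emb1_last] at r1
    rw [emb2_zero, emb2_last] at r2
    exact r1.trans r2

end PhiSec

section Count
variable {n m : ℕ} {I₁ J₁ : Finset (Fin (n+2))} {I₂ J₂ : Finset (Fin (m+2))}

@[simp] lemma cvert_val : (cvert n m).1 = n + 1 := rfl

lemma card_interiorVerts (n : ℕ) : (interiorVerts n).card = n := by
  have h : interiorVerts n = Finset.univ \ {0, Fin.last (n+1)} := by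
    ext v
    simp [interiorVerts, not_or]
  rw [h, Finset.card_sdiff_of_subset (Finset.subset_univ _), Finset.card_univ, Fintype.card_fin,
    Finset.card_insert_of_notMem
      (by simp only [Finset.mem_singleton, Fin.ext_iff, Fin.val_zero, Fin.val_last]; omega),
    Finset.card_singleton]
  omega

lemma emb1_mem_phi (hI₂ : I₂ ⊆ interiorVerts m) {i : Fin (n+2)} (hi : i ∈ interiorVerts n) :
    emb1 n m i ∈ phiSet n m I₁ I₂ ↔ i ∈ I₁ := by
  obtain ⟨hi1, hi2⟩ := mem_interiorVerts.1 hi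
  rw [mem_phiSet]
  constructor
  · rintro (h | ⟨i', hi', he⟩ | ⟨j, hj, he⟩)
    · exfalso; have := congrArg Fin.val h; simp only [emb1_val, cvert_val] at this; omega
    · exact (emb1_inj he) ▸ hi'
    · exfalso
      obtain ⟨hj1, hj2⟩ := mem_interiorVerts.1 (hI₂ hj)
      have := congrArg Fin.val he; simp only [emb1_val, emb2_val] at this; omega
  · intro h; exact Or.inr (Or.inl ⟨i, h, rfl⟩)

lemma emb2_mem_phi (hI₁ : I₁ ⊆ interiorVerts n) {j : Fin (m+2)} (hj : j ∈ interiorVerts m) :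
    emb2 n m j ∈ phiSet n m I₁ I₂ ↔ j ∈ I₂ := by
  obtain ⟨hj1, hj2⟩ := mem_interiorVerts.1 hj
  rw [mem_phiSet]
  constructor
  · rintro (h | ⟨i, hi, he⟩ | ⟨j', hj', he⟩)
    · exfalso; have := congrArg Fin.val h; simp only [emb2_val, cvert_val] at this; omega
    · exfalso
      obtain ⟨hi1, hi2⟩ := mem_interiorVerts.1 (hI₁ hi)
      have := congrArg Fin.val he; simp only [emb1_val, emb2_val] at this; omega
    · exact (emb2_inj he) ▸ hj'
  · intro h; exact Or.inr (Or.inr ⟨j, h, rfl⟩)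

lemma phi_inj (hI₁ : I₁ ⊆ interiorVerts n) (hI₂ : I₂ ⊆ interiorVerts m)
    (hJ₁ : J₁ ⊆ interiorVerts n) (hJ₂ : J₂ ⊆ interiorVerts m)
    (h : phiSet n m I₁ I₂ = phiSet n m J₁ J₂) : I₁ = J₁ ∧ I₂ = J₂ := by
  constructor
  · ext i
    by_cases hi : i ∈ interiorVerts n
    · rw [← emb1_mem_phi hI₂ hi, h, emb1_mem_phi hJ₂ hi]
    · exact iff_of_false (fun hh => hi (hI₁ hh)) (fun hh => hi (hJ₁ hh))
  · ext j
    by_cases hj : j ∈ interiorVerts m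
    · rw [← emb2_mem_phi hI₁ hj, h, emb2_mem_phi hJ₁ hj]
    · exact iff_of_false (fun hh => hj (hI₂ hh)) (fun hh => hj (hJ₂ hh))

lemma phi_mem (hI₁ : I₁ ⊆ interiorVerts n) (hI₂ : I₂ ⊆ interiorVerts m) :
    phiSet n m I₁ I₂ ⊆ interiorVerts (n+m+1) := by
  intro v hv
  rcases mem_phiSet.1 hv with rfl | ⟨i, hi, rfl⟩ | ⟨j, hj, rfl⟩
  · exact mem_interiorVerts.2 (by simp only [cvert_val]; omega)
  · obtain ⟨h1, h2⟩ := mem_interiorVerts.1 (hI₁ hi)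
    exact mem_interiorVerts.2 (by simp only [emb1_val]; omega)
  · obtain ⟨h1, h2⟩ := mem_interiorVerts.1 (hI₂ hj)
    exact mem_interiorVerts.2 (by simp only [emb2_val]; omega)

lemma phi_card (hI₁ : I₁ ⊆ interiorVerts n) (hI₂ : I₂ ⊆ interiorVerts m) :
    (phiSet n m I₁ I₂).card = I₁.card + I₂.card + 1 := by
  have hd : Disjoint (I₁.image (emb1 n m)) (I₂.image (emb2 n m)) := by
    rw [Finset.disjoint_left]
    intro v hv1 hv2
    obtain ⟨i, hi, rfl⟩ := Finset.mem_image.1 hv1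
    obtain ⟨j, hj, hji⟩ := Finset.mem_image.1 hv2
    obtain ⟨hi1, hi2⟩ := mem_interiorVerts.1 (hI₁ hi)
    obtain ⟨hj1, hj2⟩ := mem_interiorVerts.1 (hI₂ hj)
    have := congrArg Fin.val hji
    simp only [emb1_val, emb2_val] at this
    omega
  have hc : cvert n m ∉ I₁.image (emb1 n m) ∪ I₂.image (emb2 n m) := by
    rw [Finset.mem_union]
    rintro (hv | hv)
    · obtain ⟨i, hi, hie⟩ := Finset.mem_image.1 hv
      obtain ⟨hi1, hi2⟩ := mem_interiorVerts.1 (hI₁ hi)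
      have := congrArg Fin.val hie
      simp only [emb1_val, cvert_val] at this; omega
    · obtain ⟨j, hj, hje⟩ := Finset.mem_image.1 hv
      obtain ⟨hj1, hj2⟩ := mem_interiorVerts.1 (hI₂ hj)
      have := congrArg Fin.val hje
      simp only [emb2_val, cvert_val] at this; omega
  rw [phiSet, Finset.card_insert_of_notMem hc, Finset.card_union_of_disjoint hd,
      Finset.card_image_of_injective _ emb1_inj, Finset.card_image_of_injective _ emb2_inj]

lemma phi_surj {I : Finset (Fin (n+m+3))} (hI : I ⊆ interiorVerts (n+m+1))
    (hc : cvert n m ∈ I) :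
    phiSet n m ((interiorVerts n).filter (fun i => emb1 n m i ∈ I))
      ((interiorVerts m).filter (fun j => emb2 n m j ∈ I)) = I := by
  ext v
  constructor
  · intro hv
    rcases mem_phiSet.1 hv with rfl | ⟨i, hi, rfl⟩ | ⟨j, hj, rfl⟩
    · exact hc
    · exact (Finset.mem_filter.1 hi).2
    · exact (Finset.mem_filter.1 hj).2
  · intro hv
    obtain ⟨h1, h2⟩ := mem_interiorVerts.1 (hI hv)
    rcases lt_trichotomy v.1 (n+1) with hlt | heq | hgt
    · have hemb : emb1 n m ⟨v.1, by omega⟩ = v := Fin.ext rfl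
      refine mem_phiSet.2 (Or.inr (Or.inl ⟨⟨v.1, by omega⟩, ?_, hemb⟩))
      refine Finset.mem_filter.2 ⟨mem_interiorVerts.2 ⟨?_, ?_⟩, by rw [hemb]; exact hv⟩
      · exact h1
      · simp only []; omega
    · exact mem_phiSet.2 (Or.inl (Fin.ext heq))
    · have hlt2 := v.isLt
      have hemb : emb2 n m ⟨v.1 - (n+1), by omega⟩ = v := Fin.ext (by simp only [emb2_val]; omega)
      refine mem_phiSet.2 (Or.inr (Or.inr ⟨⟨v.1 - (n+1), by omega⟩, ?_, hemb⟩))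
      refine Finset.mem_filter.2 ⟨mem_interiorVerts.2 ⟨?_, ?_⟩, by rw [hemb]; exact hv⟩
      · simp only []; omega
      · simp only []; omega

end Count


/-- `π_{n+m+1}(G₁ ⊙ G₂) = π_n(G₁) ⋅ π_m(G₂)` for connected graphs `G₁ ∈ 𝒢_n`, `G₂ ∈ 𝒢_m`. -/
theorem piFun_concat (n m : ℕ)
    (G₁ : SimpleGraph (Fin (n + 2))) (G₂ : SimpleGraph (Fin (m + 2)))
    (hG₁ : G₁.Connected) (hG₂ : G₂.Connected) :
    piFun (n + m + 1) (concatG G₁ G₂) = piFun n G₁ * piFun m G₂ := by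
  classical
  have h0 : piFun (n + m + 1) (concatG G₁ G₂) =
      ∑ I ∈ (interiorVerts (n+m+1)).powerset,
        (-1 : ℤ) ^ (n + m + 1 - I.card) *
          (if ConnIn (concatG G₁ G₂) (0 : Fin (n+m+3)) (Fin.last (n+m+2)) ↑I then 1 else 0) := rfl
  have h2 : ∀ I ∈ (interiorVerts (n+m+1)).powerset.filter (fun I => ¬ cvert n m ∈ I),
      (-1 : ℤ) ^ (n + m + 1 - I.card) *
        (if ConnIn (concatG G₁ G₂) (0 : Fin (n+m+3)) (Fin.last (n+m+2)) ↑I then 1 else 0) = 0 := by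
    intro I hI
    rw [if_neg (not_connIn (Finset.mem_filter.1 hI).2), mul_zero]
  have hprod : piFun n G₁ * piFun m G₂ =
      ∑ p ∈ (interiorVerts n).powerset ×ˢ (interiorVerts m).powerset,
        ((-1 : ℤ) ^ (n - p.1.card) *
            (if ConnIn G₁ 0 (Fin.last (n+1)) ↑p.1 then 1 else 0)) *
        ((-1 : ℤ) ^ (m - p.2.card) *
            (if ConnIn G₂ 0 (Fin.last (m+1)) ↑p.2 then 1 else 0)) := by
    rw [piFun, piFun, Finset.sum_mul_sum, Finset.sum_product]
  rw [h0, ← Finset.sum_filter_add_sum_filter_not ((interiorVerts (n+m+1)).powerset)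
      (fun I => cvert n m ∈ I), Finset.sum_eq_zero h2, add_zero, hprod]
  refine (Finset.sum_bij (fun p _ => phiSet n m p.1 p.2) ?_ ?_ ?_ ?_).symm
  · intro p hp
    obtain ⟨hp1, hp2⟩ := Finset.mem_product.1 hp
    exact Finset.mem_filter.2 ⟨Finset.mem_powerset.2
      (phi_mem (Finset.mem_powerset.1 hp1) (Finset.mem_powerset.1 hp2)),
      mem_phiSet.2 (Or.inl rfl)⟩
  · intro p hp q hq h
    obtain ⟨hp1, hp2⟩ := Finset.mem_product.1 hp
    obtain ⟨hq1, hq2⟩ := Finset.mem_product.1 hq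
    obtain ⟨e1, e2⟩ := phi_inj (Finset.mem_powerset.1 hp1) (Finset.mem_powerset.1 hp2)
      (Finset.mem_powerset.1 hq1) (Finset.mem_powerset.1 hq2) h
    exact Prod.ext e1 e2
  · intro I hI
    obtain ⟨hIp, hIc⟩ := Finset.mem_filter.1 hI
    refine ⟨((interiorVerts n).filter fun i => emb1 n m i ∈ I,
             (interiorVerts m).filter fun j => emb2 n m j ∈ I), ?_, ?_⟩
    · exact Finset.mem_product.2 ⟨Finset.mem_powerset.2 (Finset.filter_subset _ _),
        Finset.mem_powerset.2 (Finset.filter_subset _ _)⟩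
    · exact phi_surj (Finset.mem_powerset.1 hIp) hIc
  · intro p hp
    obtain ⟨hp1, hp2⟩ := Finset.mem_product.1 hp
    have h1 := Finset.mem_powerset.1 hp1
    have h2' := Finset.mem_powerset.1 hp2
    have hc1 : p.1.card ≤ n := le_trans (Finset.card_le_card h1) (card_interiorVerts n).le
    have hc2 : p.2.card ≤ m := le_trans (Finset.card_le_card h2') (card_interiorVerts m).le
    have hcequiv := conn_equiv (G₁ := G₁) (G₂ := G₂) h1 h2'
    rw [phi_card h1 h2',
      show n + m + 1 - (p.1.card + p.2.card + 1) = (n - p.1.card) + (m - p.2.card) from by omega,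
      pow_add]
    by_cases hP1 : ConnIn G₁ 0 (Fin.last (n+1)) ↑p.1 <;>
      by_cases hP2 : ConnIn G₂ 0 (Fin.last (m+1)) ↑p.2 <;>
      simp [hcequiv, hP1, hP2] <;> ring

end
end
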